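/- arXiv:2109.05222 — 2 statements merged into one kernel-verified Lean document; each statement's English description precedes it below -/
import Mathlib

section
/- Let a ≥ b > 0 and c > 0 be real numbers. Then the function f(x) = log((a·x + c)/(b·x + c)) is concave on [0, ∞). -/
open Set Real

lemma concaveOn_congr' {s : Set ℝ} {f g : ℝ → ℝ} (h : ConcaveOn ℝ s f)
    (hfg : ∀ x ∈ s, f x = g x) : ConcaveOn ℝ s g := by
  refine ⟨h.1, fun x hx y hy p q hp hq hpq => ?_⟩
  rw [← hfg x hx, ← hfg y hy, ← hfg _ (h.1 hx hy hp hq hpq)]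
  exact h.2 hx hy hp hq hpq

lemma aux_concave (a b c : ℝ) (hab : b ≤ a) (hb : 0 < b) (hc : 0 < c) :
    ConcaveOn ℝ (Set.Ici (0 : ℝ)) (fun x => Real.log (a * x + c) - Real.log (b * x + c)) := by
  have ha : 0 < a := lt_of_lt_of_le hb hab
  have hA : ∀ x : ℝ, x ∈ Set.Ici (0:ℝ) → 0 < a * x + c := fun x hx =>
    add_pos_of_nonneg_of_pos (mul_nonneg ha.le hx) hc
  have hB : ∀ x : ℝ, x ∈ Set.Ici (0:ℝ) → 0 < b * x + c := fun x hx =>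
    add_pos_of_nonneg_of_pos (mul_nonneg hb.le hx) hc
  have hIoi : ∀ x : ℝ, x ∈ interior (Set.Ici (0:ℝ)) → x ∈ Set.Ici (0:ℝ) := by
    intro x hx
    exact interior_subset hx
  refine concaveOn_of_hasDerivWithinAt2_nonpos (convex_Ici 0) ?_
    (f' := fun x => a / (a * x + c) - b / (b * x + c))
    (f'' := fun x => -(a / (a * x + c))^2 + (b / (b * x + c))^2) ?_ ?_ ?_
  · apply ContinuousOn.sub
    · exact (Real.continuousOn_log.comp
        (by fun_prop) (fun x hx => (hA x hx).ne'))
    · exact (Real.continuousOn_log.comp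
        (by fun_prop) (fun x hx => (hB x hx).ne'))
  · intro x hx
    have hx' := hIoi x hx
    have h1 : HasDerivAt (fun x : ℝ => a * x + c) a x := by
      simpa using ((hasDerivAt_id x).const_mul a).add_const c
    have h2 : HasDerivAt (fun x : ℝ => b * x + c) b x := by
      simpa using ((hasDerivAt_id x).const_mul b).add_const c
    have d1 : HasDerivAt (fun x : ℝ => Real.log (a * x + c)) (a / (a * x + c)) x := by
      simpa [div_eq_inv_mul, Function.comp_def] using (Real.hasDerivAt_log (hA x hx').ne').comp x h1
    have d2 : HasDerivAt (fun x : ℝ => Real.log (b * x + c)) (b / (b * x + c)) x := by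
      simpa [div_eq_inv_mul, Function.comp_def] using (Real.hasDerivAt_log (hB x hx').ne').comp x h2
    exact (d1.sub d2).hasDerivWithinAt
  · intro x hx
    have hx' := hIoi x hx
    have h1 : HasDerivAt (fun x : ℝ => a * x + c) a x := by
      simpa using ((hasDerivAt_id x).const_mul a).add_const c
    have h2 : HasDerivAt (fun x : ℝ => b * x + c) b x := by
      simpa using ((hasDerivAt_id x).const_mul b).add_const c
    have d1 : HasDerivAt (fun x : ℝ => a / (a * x + c))
        (-(a * a) / (a * x + c)^2) x := by
      simpa [div_eq_mul_inv, mul_comm, mul_assoc, neg_div] using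
        (h1.inv (hA x hx').ne').const_mul a
    have d2 : HasDerivAt (fun x : ℝ => b / (b * x + c))
        (-(b * b) / (b * x + c)^2) x := by
      simpa [div_eq_mul_inv, mul_comm, mul_assoc, neg_div] using
        (h2.inv (hB x hx').ne').const_mul b
    have := (d1.sub d2).hasDerivWithinAt (s := interior (Set.Ici (0:ℝ)))
    convert this using 1
    iterate 3 exact rfl
    rw [div_pow, div_pow]
    ring
  · intro x hx
    have hx' := hIoi x hx
    have key : b / (b * x + c) ≤ a / (a * x + c) := by
      rw [div_le_div_iff₀ (hB x hx') (hA x hx')]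
      nlinarith [mul_nonneg (sub_nonneg.2 hab) hc.le, hIoi x hx]
    have h1 : (0:ℝ) ≤ b / (b * x + c) := div_nonneg hb.le (hB x hx').le
    nlinarith [sq_nonneg (a / (a * x + c) - b / (b * x + c))]

theorem concave_log_ratio (a b c : ℝ) (hab : b ≤ a) (hb : 0 < b) (hc : 0 < c) :
    ConcaveOn ℝ (Set.Ici (0 : ℝ)) (fun x => Real.log ((a * x + c) / (b * x + c))) := by
  have ha : 0 < a := lt_of_lt_of_le hb hab
  refine concaveOn_congr' (aux_concave a b c hab hb hc) ?_
  intro x hx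
  have hx' : (0:ℝ) ≤ x := hx
  rw [Real.log_div (add_pos_of_nonneg_of_pos (mul_nonneg ha.le hx') hc).ne'
    (add_pos_of_nonneg_of_pos (mul_nonneg hb.le hx') hc).ne']
end

section
/- Consider projected SGD on a convex set 𝒳 ⊂ ℝ^d of diameter at most D, minimizing a convex function f: x_{t+1} = Γ_𝒳(x_t − η·ĝ_t), where Γ_𝒳 is Euclidean projection and ĝ_t is a random vector satisfying ‖E[ĝ_t | x_t] − g_t‖ ≤ β for some subgradient g_t ∈ ∂f(x_t) and E[‖ĝ_t‖² | x_t] ≤ α². Then with η = D/(α√T), the average iterate x̄_T = (1/T)∑_{t=1}^{T} x_t satisfies E[f(x̄_T)] − min_{x∈𝒳} f(x) ≤ D·(α/√T + β). -/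
open MeasureTheory ProbabilityTheory

section Aux


variable {Ω : Type*} [m0 : MeasurableSpace Ω]

lemma condexp_inner_const {μ : Measure Ω} [IsFiniteMeasure μ] {m : MeasurableSpace Ω}
    (hm : m ≤ m0) {E : Type*} [NormedAddCommGroup E] [InnerProductSpace ℝ E] [CompleteSpace E]
    {F : Ω → E} (hF : Integrable F μ) (c : E) :
    (fun ω => (inner ℝ c ((μ[F|m]) ω) : ℝ)) =ᵐ[μ] μ[fun ω => (inner ℝ c (F ω) : ℝ) | m] := by
  have hic : ∀ {G : Ω → E}, Integrable G μ → Integrable (fun ω => (inner ℝ c (G ω) : ℝ)) μ := by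
    intro G hG
    refine (hG.norm.const_mul ‖c‖).mono' ?_ ?_
    · exact AEStronglyMeasurable.inner aestronglyMeasurable_const hG.1
    · exact Filter.Eventually.of_forall fun ω => by
        simpa using abs_real_inner_le_norm c (G ω)
  refine ae_eq_condExp_of_forall_setIntegral_eq hm (hic hF) ?_ ?_ ?_
  · intro s _ _
    exact (hic (integrable_condExp (f := F) (m := m) (μ := μ))).restrict
  · intro s hs _
    rw [integral_inner ((integrable_condExp (f := F) (m := m) (μ := μ)).restrict (s := s)) c,
        integral_inner (hF.restrict (s := s)) c, setIntegral_condExp hm hF hs]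
  · exact StronglyMeasurable.aestronglyMeasurable
      ((continuous_const.inner continuous_id).comp_stronglyMeasurable stronglyMeasurable_condExp)

lemma coord_abs_le_norm {d : ℕ} (v : EuclideanSpace ℝ (Fin d)) (i : Fin d) : |v i| ≤ ‖v‖ := by
  calc |v i| = |(inner ℝ (EuclideanSpace.single i (1:ℝ)) v : ℝ)| := by
        simp [EuclideanSpace.inner_single_left]
    _ ≤ ‖EuclideanSpace.single i (1:ℝ)‖ * ‖v‖ := abs_real_inner_le_norm _ _
    _ = ‖v‖ := by simp [EuclideanSpace.norm_single]

lemma coord_eq_inner_single {d : ℕ} {Ω' : Type*} (G : Ω' → EuclideanSpace ℝ (Fin d)) (i : Fin d) :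
    (fun ω => (inner ℝ (EuclideanSpace.single i (1:ℝ)) (G ω) : ℝ)) = fun ω => G ω i := by
  funext ω; simp [EuclideanSpace.inner_single_left]

lemma integral_condExp_inner {μ : Measure Ω} [IsProbabilityMeasure μ] {m : MeasurableSpace Ω}
    (hm : m ≤ m0) {d : ℕ} {F Y : Ω → EuclideanSpace ℝ (Fin d)}
    (hF : Integrable F μ) (hY : StronglyMeasurable[m] Y)
    {C : ℝ} (hYb : ∀ ω, ‖Y ω‖ ≤ C) :
    ∫ ω, (inner ℝ (F ω) (Y ω) : ℝ) ∂μ = ∫ ω, (inner ℝ ((μ[F|m]) ω) (Y ω) : ℝ) ∂μ := by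
  -- coordinate functions
  have hYib : ∀ i ω, |Y ω i| ≤ C := fun i ω => (coord_abs_le_norm (Y ω) i).trans (hYb ω)
  have hYim : ∀ i, StronglyMeasurable[m] (fun ω => Y ω i) := by
    intro i
    rw [← coord_eq_inner_single Y i]
    exact (continuous_const.inner continuous_id).comp_stronglyMeasurable hY
  have hFi : ∀ i, Integrable (fun ω => F ω i) μ := by
    intro i
    refine hF.norm.mono' ?_ (Filter.Eventually.of_forall fun ω => by
      simpa [Real.norm_eq_abs] using coord_abs_le_norm (F ω) i)
    rw [← coord_eq_inner_single F i]
    exact AEStronglyMeasurable.inner aestronglyMeasurable_const hF.1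
  have hcoord : ∀ i, (fun ω => (μ[F|m]) ω i) =ᵐ[μ] μ[fun ω => F ω i | m] := by
    intro i
    have h := condexp_inner_const (m0 := m0) (μ := μ) hm hF (EuclideanSpace.single i (1:ℝ))
    rwa [coord_eq_inner_single (μ[F|m]) i, coord_eq_inner_single F i] at h
  have hCEi : ∀ i, AEStronglyMeasurable (fun ω => (μ[F|m]) ω i) μ := by
    intro i
    rw [← coord_eq_inner_single (μ[F|m]) i]
    have h1 : AEStronglyMeasurable[m] (μ[F|m]) μ := stronglyMeasurable_condExp.aestronglyMeasurable
    exact AEStronglyMeasurable.inner aestronglyMeasurable_const h1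
  -- integrability of products
  have hintFY : ∀ i, Integrable (fun ω => F ω i * Y ω i) μ := by
    intro i
    have := (hFi i).bdd_mul (c := C)
      ((hYim i).mono hm).aestronglyMeasurable
      (Filter.Eventually.of_forall fun ω => by simpa [Real.norm_eq_abs] using hYib i ω)
    simpa [mul_comm] using this
  have hintCY : ∀ i, Integrable (fun ω => (μ[F|m]) ω i * Y ω i) μ := by
    intro i
    have hi : Integrable (fun ω => (μ[F|m]) ω i) μ :=
      (integrable_congr (hcoord i)).mpr (integrable_condExp (m := m) (μ := μ))
    have := hi.bdd_mul (c := C)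
      ((hYim i).mono hm).aestronglyMeasurable
      (Filter.Eventually.of_forall fun ω => by simpa [Real.norm_eq_abs] using hYib i ω)
    simpa [mul_comm] using this
  -- per-coordinate exchange
  have hco : ∀ i, ∫ ω, F ω i * Y ω i ∂μ = ∫ ω, (μ[F|m]) ω i * Y ω i ∂μ := by
    intro i
    have hmul := condExp_stronglyMeasurable_mul_of_bound hm (hYim i) (hFi i) C
      (Filter.Eventually.of_forall fun ω => by simpa [Real.norm_eq_abs] using hYib i ω)
    calc ∫ ω, F ω i * Y ω i ∂μ = ∫ ω, ((fun ω => Y ω i) * fun ω => F ω i) ω ∂μ := by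
          simp [mul_comm]
      _ = ∫ ω, (μ[(fun ω => Y ω i) * (fun ω => F ω i)|m]) ω ∂μ :=
          (integral_condExp hm).symm
      _ = ∫ ω, ((fun ω => Y ω i) * μ[fun ω => F ω i|m]) ω ∂μ := integral_congr_ae hmul
      _ = ∫ ω, (μ[F|m]) ω i * Y ω i ∂μ := by
          refine integral_congr_ae ?_
          filter_upwards [hcoord i] with ω hω
          simp [hω, mul_comm]
  -- sum over coordinates
  calc ∫ ω, (inner ℝ (F ω) (Y ω) : ℝ) ∂μ
      = ∫ ω, ∑ i, F ω i * Y ω i ∂μ := by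
        refine integral_congr_ae (Filter.Eventually.of_forall fun ω => ?_)
        simp [PiLp.inner_apply, RCLike.inner_apply, conj_trivial, mul_comm]
    _ = ∑ i, ∫ ω, F ω i * Y ω i ∂μ := integral_finset_sum _ fun i _ => hintFY i
    _ = ∑ i, ∫ ω, (μ[F|m]) ω i * Y ω i ∂μ := by simp_rw [hco]
    _ = ∫ ω, ∑ i, (μ[F|m]) ω i * Y ω i ∂μ := (integral_finset_sum _ fun i _ => hintCY i).symm
    _ = ∫ ω, (inner ℝ ((μ[F|m]) ω) (Y ω) : ℝ) ∂μ := by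
        refine integral_congr_ae (Filter.Eventually.of_forall fun ω => ?_)
        simp [PiLp.inner_apply, RCLike.inner_apply, conj_trivial, mul_comm]

end Aux

/-- Convergence of projected SGD with biased, bounded-second-moment stochastic
subgradients, sent through a projection map `Γ` onto `𝒳` (which is nonexpansive
towards points of `𝒳`, as the Euclidean projection is). -/
theorem psgd_convergence {Ω : Type*} [MeasurableSpace Ω]
    (μ : Measure Ω) [IsProbabilityMeasure μ]
    (d : ℕ) (𝒳 : Set (EuclideanSpace ℝ (Fin d)))
    (hconv : Convex ℝ 𝒳) (hclosed : IsClosed 𝒳) (hne : 𝒳.Nonempty)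
    (D α β : ℝ) (hD : 0 < D) (hα : 0 < α) (hβ : 0 ≤ β)
    (hdiam : ∀ x ∈ 𝒳, ∀ y ∈ 𝒳, ‖x - y‖ ≤ D)
    (f : EuclideanSpace ℝ (Fin d) → ℝ) (hf : ConvexOn ℝ 𝒳 f)
    (Γ : EuclideanSpace ℝ (Fin d) → EuclideanSpace ℝ (Fin d))
    (hΓmem : ∀ y, Γ y ∈ 𝒳)
    (hΓproj : ∀ y, ∀ z ∈ 𝒳, ‖Γ y - z‖ ≤ ‖y - z‖)
    (T : ℕ) (hT : 1 ≤ T)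
    (x ghat g : ℕ → Ω → EuclideanSpace ℝ (Fin d))
    (hxm : ∀ t, Measurable (x t)) (hghatm : ∀ t, Measurable (ghat t))
    (hgm : ∀ t, Measurable (g t))
    (hghat_int : ∀ t, Integrable (ghat t) μ)
    (hghat_sq_int : ∀ t, Integrable (fun ω => ‖ghat t ω‖ ^ 2) μ)
    (hx0 : ∀ ω, x 0 ω ∈ 𝒳)
    -- PSGD update with learning rate η = D / (α √T):
    (hupdate : ∀ t ω,
      x (t + 1) ω = Γ (x t ω - (D / (α * Real.sqrt T)) • ghat t ω))
    -- g t ω is a subgradient of f at x t ω (over 𝒳):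
    (hsubgrad : ∀ t ω, ∀ z ∈ 𝒳,
      f (x t ω) + inner ℝ (g t ω) (z - x t ω) ≤ f z)
    -- bias of the stochastic subgradient, conditionally on x t:
    (hbias : ∀ t, ∀ᵐ ω ∂μ,
      ‖(μ[ghat t | MeasurableSpace.comap (x t) inferInstance]) ω - g t ω‖ ≤ β)
    -- conditional second moment bound:
    (hsecond : ∀ t, ∀ᵐ ω ∂μ,
      (μ[fun ω' => ‖ghat t ω'‖ ^ 2 | MeasurableSpace.comap (x t) inferInstance]) ω ≤ α ^ 2)
    (hf_int : ∀ t, Integrable (fun ω => f (x t ω)) μ)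
    (hfavg_int :
      Integrable (fun ω => f (((T : ℝ))⁻¹ • ∑ t ∈ Finset.Icc 1 T, x t ω)) μ) :
    ∀ xstar ∈ 𝒳,
      (∫ ω, f (((T : ℝ))⁻¹ • ∑ t ∈ Finset.Icc 1 T, x t ω) ∂μ) - f xstar ≤
        D * (α / Real.sqrt T + β) := by
  intro xstar hxs
  have hTpos : (0:ℝ) < T := by exact_mod_cast Nat.lt_of_lt_of_le Nat.zero_lt_one hT
  have hst : 0 < Real.sqrt T := Real.sqrt_pos.mpr hTpos
  set st := Real.sqrt T with hst_def
  set η := D / (α * st) with hη_def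
  have hη : 0 < η := div_pos hD (mul_pos hα hst)
  -- all iterates in 𝒳
  have hmem : ∀ t ω, x t ω ∈ 𝒳 := by
    intro t
    induction t with
    | zero => exact hx0
    | succ n ih => intro ω; rw [hupdate n ω]; exact hΓmem _
  have hYb : ∀ t ω, ‖x t ω - xstar‖ ≤ D := fun t ω => hdiam _ (hmem t ω) _ hxs
  have hm : ∀ t, MeasurableSpace.comap (x t) inferInstance ≤ ‹MeasurableSpace Ω› :=
    fun t => (hxm t).comap_le
  have hYsm : ∀ t, StronglyMeasurable[MeasurableSpace.comap (x t) inferInstance]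
      (fun ω => x t ω - xstar) := fun t =>
    ((measurable_iff_comap_le.mpr le_rfl).stronglyMeasurable).sub stronglyMeasurable_const
  -- pointwise descent inequality
  have step : ∀ t ω, ‖x (t+1) ω - xstar‖^2 ≤ ‖x t ω - xstar‖^2
      - 2*η*(inner ℝ (ghat t ω) (x t ω - xstar) : ℝ) + η^2*‖ghat t ω‖^2 := by
    intro t ω
    have h1 : ‖x (t+1) ω - xstar‖ ≤ ‖(x t ω - xstar) - η • ghat t ω‖ := by
      rw [hupdate t ω, sub_right_comm]
      exact hΓproj _ xstar hxs
    have h2 : ‖(x t ω - xstar) - η • ghat t ω‖^2 = ‖x t ω - xstar‖^2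
        - 2*η*(inner ℝ (ghat t ω) (x t ω - xstar) : ℝ) + η^2*‖ghat t ω‖^2 := by
      rw [norm_sub_sq_real, real_inner_smul_right, norm_smul,
        real_inner_comm, Real.norm_eq_abs, abs_of_pos hη]
      ring
    calc ‖x (t+1) ω - xstar‖^2 ≤ ‖(x t ω - xstar) - η • ghat t ω‖^2 :=
          pow_le_pow_left₀ (norm_nonneg _) h1 2
      _ = _ := h2
  -- integrability facts
  have intN : ∀ t, Integrable (fun ω => ‖x t ω - xstar‖^2) μ := by
    intro t
    refine (integrable_const (D^2)).mono' ?_ (Filter.Eventually.of_forall fun ω => ?_)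
    · exact (((hxm t).sub measurable_const).norm.pow_const 2).aestronglyMeasurable
    · rw [Real.norm_eq_abs, abs_of_nonneg (by positivity)]
      exact pow_le_pow_left₀ (norm_nonneg _) (hYb t ω) 2
  have intInner : ∀ t, Integrable (fun ω => (inner ℝ (ghat t ω) (x t ω - xstar) : ℝ)) μ := by
    intro t
    refine ((hghat_int t).norm.mul_const D).mono' ?_ (Filter.Eventually.of_forall fun ω => ?_)
    · exact AEStronglyMeasurable.inner (hghat_int t).1
        (((hxm t).sub measurable_const).aestronglyMeasurable)
    · rw [Real.norm_eq_abs]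
      exact (abs_real_inner_le_norm _ _).trans
        (mul_le_mul_of_nonneg_left (hYb t ω) (norm_nonneg _))
  have intCE : ∀ t, Integrable (fun ω =>
      (inner ℝ ((μ[ghat t | MeasurableSpace.comap (x t) inferInstance]) ω)
        (x t ω - xstar) : ℝ)) μ := by
    intro t
    refine ((integrable_condExp (f := ghat t)
        (m := MeasurableSpace.comap (x t) inferInstance) (μ := μ)).norm.mul_const D).mono'
      ?_ (Filter.Eventually.of_forall fun ω => ?_)
    · exact AEStronglyMeasurable.inner
        (stronglyMeasurable_condExp.mono (hm t)).aestronglyMeasurable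
        (((hxm t).sub measurable_const).aestronglyMeasurable)
    · rw [Real.norm_eq_abs]
      exact (abs_real_inner_le_norm _ _).trans
        (mul_le_mul_of_nonneg_left (hYb t ω) (norm_nonneg _))
  -- second moment bound
  have hsec_int : ∀ t, ∫ ω, ‖ghat t ω‖^2 ∂μ ≤ α^2 := by
    intro t
    calc ∫ ω, ‖ghat t ω‖^2 ∂μ
        = ∫ ω, (μ[fun ω' => ‖ghat t ω'‖^2 | MeasurableSpace.comap (x t) inferInstance]) ω ∂μ :=
          (integral_condExp (hm t)).symm
      _ ≤ ∫ _ω, α^2 ∂μ := integral_mono_ae integrable_condExp (integrable_const _) (hsecond t)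
      _ = α^2 := by simp
  -- expected values of squared distances
  set N : ℕ → ℝ := fun t => ∫ ω, ‖x t ω - xstar‖^2 ∂μ with hN_def
  -- expected descent per step
  have key : ∀ t, ∫ ω, f (x t ω) ∂μ - f xstar ≤ (N t - N (t+1))/(2*η) + η/2*α^2 + β*D := by
    intro t
    -- step 1: bound inner product integral
    have hNle : 2*η*(∫ ω, (inner ℝ (ghat t ω) (x t ω - xstar) : ℝ) ∂μ)
        ≤ N t - N (t+1) + η^2 * α^2 := by
      have hmono : ∫ ω, 2*η*(inner ℝ (ghat t ω) (x t ω - xstar) : ℝ) ∂μ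
          ≤ ∫ ω, (‖x t ω - xstar‖^2 - ‖x (t+1) ω - xstar‖^2 + η^2*‖ghat t ω‖^2) ∂μ := by
        refine integral_mono ((intInner t).const_mul _)
          (((intN t).sub (intN (t+1))).add ((hghat_sq_int t).const_mul _)) fun ω => ?_
        have := step t ω
        dsimp only
        linarith
      rw [integral_const_mul] at hmono
      rw [integral_add
          (show Integrable (fun ω => ‖x t ω - xstar‖^2 - ‖x (t+1) ω - xstar‖^2) μ from
            (intN t).sub (intN (t+1)))
          ((hghat_sq_int t).const_mul _),
        integral_sub (intN t) (intN (t+1)), integral_const_mul] at hmono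
      have h2 : η^2 * ∫ ω, ‖ghat t ω‖^2 ∂μ ≤ η^2 * α^2 :=
        mul_le_mul_of_nonneg_left (hsec_int t) (by positivity)
      calc 2*η*(∫ ω, (inner ℝ (ghat t ω) (x t ω - xstar) : ℝ) ∂μ)
          ≤ N t - N (t+1) + η^2 * ∫ ω, ‖ghat t ω‖^2 ∂μ := hmono
        _ ≤ N t - N (t+1) + η^2 * α^2 := by linarith
    -- step 2: exchange ghat for its conditional expectation
    have hexch : ∫ ω, (inner ℝ (ghat t ω) (x t ω - xstar) : ℝ) ∂μ
        = ∫ ω, (inner ℝ ((μ[ghat t | MeasurableSpace.comap (x t) inferInstance]) ω)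
            (x t ω - xstar) : ℝ) ∂μ :=
      integral_condExp_inner (hm t) (hghat_int t) (hYsm t) (hYb t)
    -- step 3: subgradient + bias
    have hfb : ∫ ω, f (x t ω) ∂μ - f xstar
        ≤ (∫ ω, (inner ℝ ((μ[ghat t | MeasurableSpace.comap (x t) inferInstance]) ω)
            (x t ω - xstar) : ℝ) ∂μ) + β*D := by
      have hptwise : ∀ᵐ ω ∂μ, f (x t ω) - f xstar
          ≤ (inner ℝ ((μ[ghat t | MeasurableSpace.comap (x t) inferInstance]) ω)
              (x t ω - xstar) : ℝ) + β*D := by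
        filter_upwards [hbias t] with ω hb
        have hsg : f (x t ω) - f xstar ≤ (inner ℝ (g t ω) (x t ω - xstar) : ℝ) := by
          have := hsubgrad t ω xstar hxs
          have heq : (inner ℝ (g t ω) (xstar - x t ω) : ℝ)
              = -(inner ℝ (g t ω) (x t ω - xstar) : ℝ) := by
            rw [← inner_neg_right, neg_sub]
          linarith [this, heq.le, heq.ge]
        have hdiff : (inner ℝ (g t ω) (x t ω - xstar) : ℝ)
            - (inner ℝ ((μ[ghat t | MeasurableSpace.comap (x t) inferInstance]) ω)
              (x t ω - xstar) : ℝ) ≤ β*D := by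
          rw [← inner_sub_left]
          refine (le_abs_self _).trans ((abs_real_inner_le_norm _ _).trans ?_)
          rw [← norm_sub_rev] at hb
          exact mul_le_mul hb (hYb t ω) (norm_nonneg _) hβ
        linarith
      have hmono2 : ∫ ω, (f (x t ω) - f xstar) ∂μ
          ≤ ∫ ω, ((inner ℝ ((μ[ghat t | MeasurableSpace.comap (x t) inferInstance]) ω)
              (x t ω - xstar) : ℝ) + β*D) ∂μ :=
        integral_mono_ae
          (show Integrable (fun ω => f (x t ω) - f xstar) μ from
            (hf_int t).sub (integrable_const _))
          (show Integrable (fun ω =>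
              (inner ℝ ((μ[ghat t | MeasurableSpace.comap (x t) inferInstance]) ω)
                (x t ω - xstar) : ℝ) + β*D) μ from (intCE t).add (integrable_const _))
          hptwise
      rw [integral_sub (hf_int t) (integrable_const _),
        integral_add (intCE t) (integrable_const _)] at hmono2
      simpa using hmono2
    -- combine
    have hI : (∫ ω, (inner ℝ (ghat t ω) (x t ω - xstar) : ℝ) ∂μ)
        ≤ (N t - N (t+1))/(2*η) + η/2*α^2 := by
      rw [← le_div_iff₀' (by positivity)] at hNle
      calc (∫ ω, (inner ℝ (ghat t ω) (x t ω - xstar) : ℝ) ∂μ)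
          ≤ (N t - N (t+1) + η^2*α^2)/(2*η) := hNle
        _ = (N t - N (t+1))/(2*η) + η/2*α^2 := by field_simp
    calc ∫ ω, f (x t ω) ∂μ - f xstar
        ≤ (∫ ω, (inner ℝ ((μ[ghat t | MeasurableSpace.comap (x t) inferInstance]) ω)
            (x t ω - xstar) : ℝ) ∂μ) + β*D := hfb
      _ = (∫ ω, (inner ℝ (ghat t ω) (x t ω - xstar) : ℝ) ∂μ) + β*D := by rw [hexch]
      _ ≤ (N t - N (t+1))/(2*η) + η/2*α^2 + β*D := by linarith
  -- telescoping sum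
  have htel : ∑ t ∈ Finset.Icc 1 T, (N t - N (t+1)) = N 1 - N (T+1) := by
    rw [← Finset.Ico_add_one_right_eq_Icc, Finset.sum_Ico_eq_sum_range]
    simp only [Nat.add_sub_cancel]
    have h := Finset.sum_range_sub' (f := fun k => N (1 + k)) T
    simpa [add_comm] using h
  have hsum : ∑ t ∈ Finset.Icc 1 T, (∫ ω, f (x t ω) ∂μ - f xstar)
      ≤ (N 1 - N (T+1))/(2*η) + T*(η/2*α^2 + β*D) := by
    calc ∑ t ∈ Finset.Icc 1 T, (∫ ω, f (x t ω) ∂μ - f xstar)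
        ≤ ∑ t ∈ Finset.Icc 1 T, ((N t - N (t+1))/(2*η) + (η/2*α^2 + β*D)) :=
          Finset.sum_le_sum fun t _ => by have := key t; linarith
      _ = (∑ t ∈ Finset.Icc 1 T, (N t - N (t+1)))/(2*η) + T*(η/2*α^2 + β*D) := by
          rw [Finset.sum_add_distrib, ← Finset.sum_div, Finset.sum_const, Nat.card_Icc]
          simp only [Nat.add_sub_cancel]
          ring
      _ = (N 1 - N (T+1))/(2*η) + T*(η/2*α^2 + β*D) := by rw [htel]
  have hN1 : N 1 ≤ D^2 := by
    calc N 1 ≤ ∫ _ω, D^2 ∂μ := integral_mono (intN 1) (integrable_const _)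
          (fun ω => pow_le_pow_left₀ (norm_nonneg _) (hYb 1 ω) 2)
      _ = D^2 := by simp
  have hNT : 0 ≤ N (T+1) := integral_nonneg fun ω => by positivity
  -- Jensen
  have hjen : ∀ ω, f ((T:ℝ)⁻¹ • ∑ t ∈ Finset.Icc 1 T, x t ω)
      ≤ ∑ t ∈ Finset.Icc 1 T, (T:ℝ)⁻¹ * f (x t ω) := by
    intro ω
    have hcard : (Finset.Icc 1 T).card = T := by rw [Nat.card_Icc]; omega
    have h := hf.map_sum_le (t := Finset.Icc 1 T) (w := fun _ => (T:ℝ)⁻¹)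
      (p := fun t => x t ω) (fun i _ => by positivity)
      (by rw [Finset.sum_const, hcard, nsmul_eq_mul]; field_simp)
      (fun i _ => hmem i ω)
    rwa [← Finset.smul_sum] at h
  have hint_sum : Integrable (fun ω => ∑ t ∈ Finset.Icc 1 T, (T:ℝ)⁻¹ * f (x t ω)) μ :=
    integrable_finset_sum _ fun t _ => (hf_int t).const_mul _
  have havg : ∫ ω, f ((T:ℝ)⁻¹ • ∑ t ∈ Finset.Icc 1 T, x t ω) ∂μ
      ≤ ∑ t ∈ Finset.Icc 1 T, (T:ℝ)⁻¹ * ∫ ω, f (x t ω) ∂μ := by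
    calc ∫ ω, f ((T:ℝ)⁻¹ • ∑ t ∈ Finset.Icc 1 T, x t ω) ∂μ
        ≤ ∫ ω, ∑ t ∈ Finset.Icc 1 T, (T:ℝ)⁻¹ * f (x t ω) ∂μ :=
          integral_mono hfavg_int hint_sum hjen
      _ = ∑ t ∈ Finset.Icc 1 T, ∫ ω, (T:ℝ)⁻¹ * f (x t ω) ∂μ :=
          integral_finset_sum _ fun t _ => (hf_int t).const_mul _
      _ = ∑ t ∈ Finset.Icc 1 T, (T:ℝ)⁻¹ * ∫ ω, f (x t ω) ∂μ := by
          simp_rw [integral_const_mul]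
  -- putting everything together
  have hcard : (Finset.Icc 1 T).card = T := by rw [Nat.card_Icc]; omega
  have hTne : (T:ℝ) ≠ 0 := ne_of_gt hTpos
  have h1 : (∫ ω, f ((T:ℝ)⁻¹ • ∑ t ∈ Finset.Icc 1 T, x t ω) ∂μ) - f xstar
      ≤ (T:ℝ)⁻¹ * ∑ t ∈ Finset.Icc 1 T, (∫ ω, f (x t ω) ∂μ - f xstar) := by
    have h2 : (T:ℝ)⁻¹ * ∑ t ∈ Finset.Icc 1 T, (∫ ω, f (x t ω) ∂μ - f xstar)
        = (∑ t ∈ Finset.Icc 1 T, (T:ℝ)⁻¹ * ∫ ω, f (x t ω) ∂μ) - f xstar := by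
      rw [Finset.mul_sum]
      simp_rw [mul_sub]
      rw [Finset.sum_sub_distrib, Finset.sum_const, hcard, nsmul_eq_mul]
      field_simp
    rw [h2]
    linarith [havg]
  have h3 : (∫ ω, f ((T:ℝ)⁻¹ • ∑ t ∈ Finset.Icc 1 T, x t ω) ∂μ) - f xstar
      ≤ (T:ℝ)⁻¹ * (D^2/(2*η) + T*(η/2*α^2 + β*D)) := by
    have hmono := mul_le_mul_of_nonneg_left hsum (inv_nonneg.mpr hTpos.le)
    have hmono2 : (T:ℝ)⁻¹ * ((N 1 - N (T+1))/(2*η) + T*(η/2*α^2 + β*D))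
        ≤ (T:ℝ)⁻¹ * (D^2/(2*η) + T*(η/2*α^2 + β*D)) := by
      gcongr
      linarith
    exact h1.trans (hmono.trans hmono2)
  refine h3.trans (le_of_eq ?_)
  have hstT : st * st = (T:ℝ) := Real.mul_self_sqrt hTpos.le
  have hstne : st ≠ 0 := ne_of_gt hst
  rw [hη_def, ← hstT]
  field_simp
  ring
end
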